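/- Let H(x,y) = y²/2 + x²/2 + x⁴/4 and let k be a natural number. Then xᵏ y⁴ dx = −(8H/(k+1)·xᵏ⁺¹ − 4/(k+3)·xᵏ⁺³ − 2/(k+5)·xᵏ⁺⁵)·dH + d( xᵏ⁺¹·( 4H²/(k+1) − 4H/(k+3)·x² + (1−2H)/(k+5)·x⁴ + 1/(k+7)·x⁶ + 1/(4(k+9))·x⁸ ) ) as polynomial 1-forms on ℝ². -/

import Mathlib

/-- partial derivative in the first variable -/
noncomputable def pdx (F : ℝ → ℝ → ℝ) (x y : ℝ) : ℝ := deriv (fun t => F t y) x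

/-- partial derivative in the second variable -/
noncomputable def pdy (F : ℝ → ℝ → ℝ) (x y : ℝ) : ℝ := deriv (fun t => F x t) y

noncomputable def H (x y : ℝ) : ℝ := y^2/2 + x^2/2 + x^4/4

set_option maxHeartbeats 2000000 in
/-- (i9):  xᵏy⁴ dx = −(8H/(k+1)·xᵏ⁺¹ − 4/(k+3)·xᵏ⁺³ − 2/(k+5)·xᵏ⁺⁵)·dH
    + d( xᵏ⁺¹·(4H²/(k+1) − 4H/(k+3)·x² + (1−2H)/(k+5)·x⁴ + 1/(k+7)·x⁶ + 1/(4(k+9))·x⁸) ) -/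
theorem decomposition_i9 (k : ℕ) : ∀ x y : ℝ,
    x^k * y^4 = - (8 * H x y/((k : ℝ)+1) * x^(k+1) - 4/((k : ℝ)+3) * x^(k+3)
        - 2/((k : ℝ)+5) * x^(k+5)) * pdx H x y
      + pdx (fun x y => x^(k+1) * (4 * (H x y)^2/((k : ℝ)+1) - 4 * H x y/((k : ℝ)+3) * x^2
          + (1 - 2 * H x y)/((k : ℝ)+5) * x^4 + 1/((k : ℝ)+7) * x^6
          + 1/(4*((k : ℝ)+9)) * x^8)) x y
  ∧ (0 : ℝ) = - (8 * H x y/((k : ℝ)+1) * x^(k+1) - 4/((k : ℝ)+3) * x^(k+3)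
        - 2/((k : ℝ)+5) * x^(k+5)) * pdy H x y
      + pdy (fun x y => x^(k+1) * (4 * (H x y)^2/((k : ℝ)+1) - 4 * H x y/((k : ℝ)+3) * x^2
          + (1 - 2 * H x y)/((k : ℝ)+5) * x^4 + 1/((k : ℝ)+7) * x^6
          + 1/(4*((k : ℝ)+9)) * x^8)) x y := by
  intro x y
  have hk1 : ((k:ℝ)+1) ≠ 0 := by positivity
  have hk3 : ((k:ℝ)+3) ≠ 0 := by positivity
  have hk5 : ((k:ℝ)+5) ≠ 0 := by positivity
  have hk7 : ((k:ℝ)+7) ≠ 0 := by positivity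
  have hk9 : ((k:ℝ)+9) ≠ 0 := by positivity
  have hH : HasDerivAt (fun t => H t y) (x + x^3) x := by
    have h := (((hasDerivAt_pow 2 x).div_const 2).const_add (y^2/2)).add
      ((hasDerivAt_pow 4 x).div_const 4)
    have e : ((2:ℕ):ℝ) * x^(2-1)/2 + ((4:ℕ):ℝ)*x^(4-1)/4 = x + x^3 := by norm_num
    rw [e] at h
    exact h
  have hHy : HasDerivAt (fun t => H x t) y y := by
    have h := ((((hasDerivAt_pow 2 y).div_const 2).add_const (x^2/2)).add_const (x^4/4))
    have e : ((2:ℕ):ℝ) * y^(2-1)/2 = y := by norm_num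
    rw [e] at h
    simpa [H] using h
  have hA := ((hH.pow 2).const_mul (4:ℝ)).div_const ((k:ℝ)+1)
  have hB := ((hH.const_mul (4:ℝ)).div_const ((k:ℝ)+3)).mul (hasDerivAt_pow 2 x)
  have hC := (((hH.const_mul (2:ℝ)).const_sub 1).div_const ((k:ℝ)+5)).mul (hasDerivAt_pow 4 x)
  have hD := (hasDerivAt_pow 6 x).const_mul (1/((k:ℝ)+7))
  have hE := (hasDerivAt_pow 8 x).const_mul (1/(4*((k:ℝ)+9)))
  have hF := (hasDerivAt_pow (k+1) x).mul ((((hA.sub hB).add hC).add hD).add hE)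
  have hAy := ((hHy.pow 2).const_mul (4:ℝ)).div_const ((k:ℝ)+1)
  have hBy := ((hHy.const_mul (4:ℝ)).div_const ((k:ℝ)+3)).mul_const (x^2)
  have hCy := (((hHy.const_mul (2:ℝ)).const_sub 1).div_const ((k:ℝ)+5)).mul_const (x^4)
  have hFy := ((((hAy.sub hBy).add hCy).add_const (1/((k:ℝ)+7)*x^6)).add_const
      (1/(4*((k:ℝ)+9))*x^8)).const_mul (x^(k+1))
  constructor
  · simp only [pdx]
    rw [hH.deriv]
    erw [hF.deriv]
    simp only [H, Nat.add_sub_cancel, Pi.add_apply, Pi.sub_apply, Pi.mul_apply, Pi.pow_apply]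
    push_cast
    field_simp
    ring
  · simp only [pdy]
    rw [hHy.deriv]
    erw [hFy.deriv]
    simp only [H, Nat.add_sub_cancel]
    push_cast
    field_simp
    ring
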